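/- Let G be a graph on n vertices with Hamilton cycle v₁, v₂, …, v_n. Suppose 1 ≤ p₁ < p₂ < q₁ < q₂ < r₁ < r₂ < s₁ < s₂ ≤ n and {v_{p₁}, v_{r₂}}, {v_{p₂}, v_{r₁}}, {v_{q₁}, v_{s₂}}, {v_{q₂}, v_{s₁}} are edges of G. Then G contains a cycle of length n − (p₂−p₁−1) − (q₂−q₁−1) − (r₂−r₁−1) − (s₂−s₁−1) whose vertex set consists of all vertices of G except the vertices v_i with p₁ < i < p₂, with q₁ < i < q₂, with r₁ < i < r₂, or with s₁ < i < s₂. -/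

import Mathlib

/-- `v 1, v 2, …, v n` is a Hamilton cycle of `G`: the `v i` for `1 ≤ i ≤ n` are pairwise
distinct, every vertex occurs among them, consecutive ones are adjacent, and `v n` is
adjacent to `v 1`. -/
def IsHamCycleList {V : Type} [Fintype V] (G : SimpleGraph V) (n : ℕ) (v : ℕ → V) : Prop :=
  Fintype.card V = n ∧
  (∀ i j : ℕ, 1 ≤ i → i < j → j ≤ n → v i ≠ v j) ∧
  (∀ x : V, ∃ i : ℕ, 1 ≤ i ∧ i ≤ n ∧ v i = x) ∧
  (∀ i : ℕ, 1 ≤ i → i < n → G.Adj (v i) (v (i + 1))) ∧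
  G.Adj (v n) (v 1)

private lemma seg_exists {V : Type} (G : SimpleGraph V) (v : ℕ → V) :
    ∀ (a b : ℕ), a ≤ b → (∀ i, a ≤ i → i < b → G.Adj (v i) (v (i + 1))) →
    ∃ w : G.Walk (v a) (v b), w.support = (List.range' a (b - a + 1)).map v := by
  intro a b hab
  induction b, hab using Nat.le_induction with
  | base => exact fun _ => ⟨SimpleGraph.Walk.nil, by simp⟩
  | succ b hab ih =>
    intro hadj
    obtain ⟨w, hw⟩ := ih (fun i hi hib => hadj i hi (by omega))
    refine ⟨w.concat (hadj b hab (by omega)), ?_⟩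
    rw [SimpleGraph.Walk.support_concat, hw]
    have h1 : b + 1 - a + 1 = (b - a + 1) + 1 := by omega
    have h2 : a + (b - a + 1) = b + 1 := by omega
    rw [h1, List.range'_1_concat (s := a) (n := b - a + 1), h2, List.map_append]
    simp

private lemma not_mem_edges_start {V : Type} {G : SimpleGraph V} {u x : V}
    (p : G.Walk u x) (hnd : p.support.Nodup) (hl : 2 ≤ p.length) : s(x, u) ∉ p.edges := by
  intro hmem
  cases p with
  | nil => simp at hl
  | @cons _ w _ h q =>
    rw [SimpleGraph.Walk.edges_cons, List.mem_cons] at hmem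
    rw [SimpleGraph.Walk.support_cons, List.nodup_cons] at hnd
    obtain ⟨hu, hqnd⟩ := hnd
    rcases hmem with heq | hmem
    · rw [Sym2.eq_iff] at heq
      rcases heq with ⟨hxu, _⟩ | ⟨hxw, _⟩
      · exact hu (hxu ▸ q.end_mem_support)
      · cases q with
        | nil => simp at hl
        | @cons _ w' _ h' q' =>
          rw [SimpleGraph.Walk.support_cons, List.nodup_cons] at hqnd
          exact hqnd.1 (hxw ▸ q'.end_mem_support)
    · exact hu (q.snd_mem_support_of_mem_edges hmem)

/-- If `G` has Hamilton cycle `v 1, …, v n`,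
`1 ≤ p₁ < p₂ < q₁ < q₂ < r₁ < r₂ < s₁ < s₂ ≤ n`, and `{v p₁, v r₂}`, `{v p₂, v r₁}`,
`{v q₁, v s₂}`, `{v q₂, v s₁}` are edges of `G`, then `G` has a cycle of length
`n − (p₂−p₁−1) − (q₂−q₁−1) − (r₂−r₁−1) − (s₂−s₁−1)` whose vertex set consists of all
vertices except the `v i` with `p₁ < i < p₂`, `q₁ < i < q₂`, `r₁ < i < r₂` or
`s₁ < i < s₂`. -/
theorem statement14 {V : Type} [Fintype V] (G : SimpleGraph V) (n : ℕ) (v : ℕ → V)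
    (hham : IsHamCycleList G n v) (p₁ p₂ q₁ q₂ r₁ r₂ s₁ s₂ : ℕ)
    (hp₁ : 1 ≤ p₁) (hp : p₁ < p₂) (hpq : p₂ < q₁) (hq : q₁ < q₂) (hqr : q₂ < r₁)
    (hr : r₁ < r₂) (hrs : r₂ < s₁) (hs : s₁ < s₂) (hs₂ : s₂ ≤ n)
    (e₁ : G.Adj (v p₁) (v r₂)) (e₂ : G.Adj (v p₂) (v r₁))
    (e₃ : G.Adj (v q₁) (v s₂)) (e₄ : G.Adj (v q₂) (v s₁)) :
    ∃ (u : V) (w : G.Walk u u), w.IsCycle ∧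
      w.length = n - (p₂ - p₁ - 1) - (q₂ - q₁ - 1) - (r₂ - r₁ - 1) - (s₂ - s₁ - 1) ∧
      ∀ x : V, x ∈ w.support ↔
        ¬ ∃ i : ℕ, ((p₁ < i ∧ i < p₂) ∨ (q₁ < i ∧ i < q₂) ∨ (r₁ < i ∧ i < r₂) ∨
          (s₁ < i ∧ i < s₂)) ∧ v i = x := by
  obtain ⟨hcard, hdist, hsurj, hadj, hlast⟩ := hham
  obtain ⟨w1, hw1⟩ := seg_exists G v 1 p₁ hp₁ (fun i hi hib => hadj i hi (by omega))
  obtain ⟨w2, hw2⟩ := seg_exists G v r₂ s₁ (by omega)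
    (fun i hi hib => hadj i (by omega) (by omega))
  obtain ⟨w3, hw3⟩ := seg_exists G v q₂ r₁ (by omega)
    (fun i hi hib => hadj i (by omega) (by omega))
  obtain ⟨w4, hw4⟩ := seg_exists G v p₂ q₁ (by omega)
    (fun i hi hib => hadj i (by omega) (by omega))
  obtain ⟨w5, hw5⟩ := seg_exists G v s₂ n (by omega)
    (fun i hi hib => hadj i (by omega) (by omega))
  set P : G.Walk (v 1) (v n) :=
    w1.append (SimpleGraph.Walk.cons e₁ (w2.append (SimpleGraph.Walk.cons e₄.symm
      (w3.append (SimpleGraph.Walk.cons e₂.symm (w4.append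
      (SimpleGraph.Walk.cons e₃ w5))))))) with hP
  set I : List ℕ := List.range' 1 (p₁ - 1 + 1) ++ (List.range' r₂ (s₁ - r₂ + 1) ++
    (List.range' q₂ (r₁ - q₂ + 1) ++ (List.range' p₂ (q₁ - p₂ + 1) ++
    List.range' s₂ (n - s₂ + 1)))) with hI
  have hPsupp : P.support = I.map v := by
    simp only [hP, SimpleGraph.Walk.support_append, SimpleGraph.Walk.support_cons,
      List.tail_cons, hw1, hw2, hw3, hw4, hw5, hI, List.map_append]
  have hImem : ∀ j, j ∈ I ↔ ((1 ≤ j ∧ j ≤ p₁) ∨ (r₂ ≤ j ∧ j ≤ s₁) ∨ (q₂ ≤ j ∧ j ≤ r₁) ∨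
      (p₂ ≤ j ∧ j ≤ q₁) ∨ (s₂ ≤ j ∧ j ≤ n)) := by
    intro j
    simp only [hI, List.mem_append, List.mem_range'_1]
    omega
  have hInodup : I.Nodup := by
    simp only [hI, List.nodup_append, List.disjoint_left, List.mem_append, List.mem_range'_1]
    repeat' apply And.intro
    all_goals first
      | exact List.nodup_range'
      | (intro a ha hb; omega)
  have hinj : ∀ i j, 1 ≤ i → i ≤ n → 1 ≤ j → j ≤ n → v i = v j → i = j := by
    intro i j hi hin hj hjn hv
    rcases Nat.lt_trichotomy i j with h | h | h
    · exact absurd hv (hdist i j hi h hjn)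
    · exact h
    · exact absurd hv.symm (hdist j i hj h hin)
  have hPnodup : P.support.Nodup := by
    rw [hPsupp]
    refine List.Nodup.map_on ?_ hInodup
    intro i hi j hj hv
    have h1 := (hImem i).1 hi
    have h2 := (hImem j).1 hj
    exact hinj i j (by omega) (by omega) (by omega) (by omega) hv
  have hIlen : I.length = (p₁ - 1 + 1) + ((s₁ - r₂ + 1) + ((r₁ - q₂ + 1) +
      ((q₁ - p₂ + 1) + (n - s₂ + 1)))) := by
    simp [hI]
  have hPlen : P.support.length = I.length := by rw [hPsupp, List.length_map]
  have hlsup := P.length_support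
  have hP2 : 2 ≤ P.length := by omega
  refine ⟨v n, SimpleGraph.Walk.cons hlast P, ?_, ?_, ?_⟩
  · rw [SimpleGraph.Walk.cons_isCycle_iff]
    exact ⟨SimpleGraph.Walk.IsPath.mk' hPnodup, not_mem_edges_start P hPnodup hP2⟩
  · rw [SimpleGraph.Walk.length_cons]
    omega
  · intro x
    have hsupp : (SimpleGraph.Walk.cons hlast P).support = v n :: I.map v := by
      rw [SimpleGraph.Walk.support_cons, hPsupp]
    rw [hsupp]
    constructor
    · intro hx ⟨i, hgap, hvi⟩
      have hx' : ∃ j ∈ I, v j = x := by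
        rcases List.mem_cons.mp hx with h | h
        · exact ⟨n, (hImem n).2 (by omega), h.symm⟩
        · obtain ⟨j, hj, hjx⟩ := List.mem_map.mp h
          exact ⟨j, hj, hjx⟩
      obtain ⟨j, hjI, hjx⟩ := hx'
      have hjb := (hImem j).1 hjI
      have : i = j := hinj i j (by omega) (by omega) (by omega) (by omega)
        (by rw [hvi, ← hjx])
      omega
    · intro hgap
      obtain ⟨j, hj1, hjn, rfl⟩ := hsurj x
      have hjI : j ∈ I := by
        rw [hImem]
        by_contra hnot
        have : (p₁ < j ∧ j < p₂) ∨ (q₁ < j ∧ j < q₂) ∨ (r₁ < j ∧ j < r₂) ∨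
            (s₁ < j ∧ j < s₂) := by omega
        exact hgap ⟨j, this, rfl⟩
      exact List.mem_cons_of_mem _ (List.mem_map_of_mem (f := v) hjI)
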